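/- Let Q ∈ R^{n×n}, R ∈ R^{n×m}, S ∈ R^{m×n}, and let M be the (n+m)×(n+m) block matrix M = [[Q, R],[S, 0]]. Define the sequence of n×n matrices Q_0 = I, Q_1 = Q, and Q_k = Q·Q_{k-1} + R·S·Q_{k-2} for k ≥ 2. Then for every k ≥ 2, M^k equals the block matrix [[Q_k, Q_{k-1}·R],[S·Q_{k-1}, S·Q_{k-2}·R]]. -/
import Mathlib


open Matrix

/-- The recursively defined sequence `Q₀ = I`, `Q₁ = Q`,
`Q_{k+2} = Q·Q_{k+1} + R·S·Q_k`. -/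
def Qseq {n m : ℕ} (Q : Matrix (Fin n) (Fin n) ℝ) (R : Matrix (Fin n) (Fin m) ℝ)
    (S : Matrix (Fin m) (Fin n) ℝ) : ℕ → Matrix (Fin n) (Fin n) ℝ
  | 0 => 1
  | 1 => Q
  | (k + 2) => Q * Qseq Q R S (k + 1) + R * S * Qseq Q R S k

/-- For the block matrix `M = [[Q, R], [S, 0]]`, for every `k ≥ 2`,
`M^k = [[Q_k, Q_{k-1}·R], [S·Q_{k-1}, S·Q_{k-2}·R]]`. -/
theorem block_matrix_power (n m : ℕ)
    (Q : Matrix (Fin n) (Fin n) ℝ) (R : Matrix (Fin n) (Fin m) ℝ)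
    (S : Matrix (Fin m) (Fin n) ℝ) :
    ∀ k : ℕ, 2 ≤ k →
      (Matrix.fromBlocks Q R S (0 : Matrix (Fin m) (Fin m) ℝ)) ^ k =
        Matrix.fromBlocks (Qseq Q R S k) (Qseq Q R S (k - 1) * R)
          (S * Qseq Q R S (k - 1)) (S * Qseq Q R S (k - 2) * R) := by
  intro k hk
  obtain ⟨j, rfl⟩ : ∃ j, k = j + 2 := ⟨k - 2, by omega⟩
  clear hk
  induction j with
  | zero =>
      show _ ^ 2 = _
      rw [pow_two, Matrix.fromBlocks_multiply]
      simp [Qseq, Matrix.mul_assoc]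
  | succ j ih =>
      have : j + 1 + 2 = (j + 2) + 1 := by ring
      rw [this, pow_succ', ih, Matrix.fromBlocks_multiply]
      simp only [Nat.add_sub_cancel, Nat.succ_sub_one]
      have h1 : Q * Qseq Q R S (j + 2) + R * (S * Qseq Q R S (j + 1)) = Qseq Q R S (j + 2 + 1) := by
        simp [Qseq, Matrix.mul_assoc]
      have h2 : Q * (Qseq Q R S (j + 1) * R) + R * (S * Qseq Q R S j * R) = Qseq Q R S (j + 2) * R := by
        simp [Qseq, Matrix.add_mul, Matrix.mul_assoc]
      rw [h1, h2]
      simp [Matrix.mul_assoc]
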